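/- arXiv:1805.12477 — 3 statements merged into one kernel-verified Lean document; each statement's English description precedes it below -/
import Mathlib

section
/- Let E be a finite set and let A be a symmetric E×E matrix over 𝔽₂ (the adjacency matrix of a framed graph on vertex set E). Then the nondegeneracy set system (E; Φ(A)), where Φ(A) = {U ⊆ E : the submatrix A|_U is invertible over 𝔽₂}, is a delta-matroid: it is proper (∅ ∈ Φ(A)) and satisfies the symmetric exchange axiom. -/
open Finset
open scoped symmDiff

variable {E : Type*} [Fintype E] [DecidableEq E]

/-- The symplectic vector space `V_E = (E → 𝔽₂) × (E → 𝔽₂)`. -/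
abbrev V (E : Type*) : Type _ := (E → ZMod 2) × (E → ZMod 2)

/-- Basis vector `e`. -/
def baseV (e : E) : V E := (Pi.single e 1, 0)

/-- Basis vector `e^∨`. -/
def dualV (e : E) : V E := (0, Pi.single e 1)

/-- The symplectic form on `V E`. -/
def omegaForm (u v : V E) : ZMod 2 := ∑ e, (u.1 e * v.2 e + u.2 e * v.1 e)

/-- A subspace is Lagrangian if the form vanishes on it and its dimension is `|E|`. -/
def IsLagrangian (L : Submodule (ZMod 2) (V E)) : Prop :=
  (∀ u ∈ L, ∀ v ∈ L, omegaForm u v = 0) ∧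
    Module.finrank (ZMod 2) L = Fintype.card E

/-- The span of `{e^∨ : e ∈ Y} ∪ {e : e ∈ E \ Y}`. -/
def coordSpan (Y : Finset E) : Submodule (ZMod 2) (V E) :=
  Submodule.span (ZMod 2)
    ((fun e => dualV e) '' (Y : Set E) ∪ (fun e => baseV e) '' ((Yᶜ : Finset E) : Set E))

/-- `Y` is feasible for `L` iff `L ∩ ⟨Y^∨ ⊔ (E \ Y)⟩ = 0`. -/
def Feasible (L : Submodule (ZMod 2) (V E)) (Y : Finset E) : Prop :=
  L ⊓ coordSpan Y = ⊥

/-- The set system `ν_E(L)`. -/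
def nu (L : Submodule (ZMod 2) (V E)) : Set (Finset E) := {Y | Feasible L Y}

/-- The nondegeneracy set system of a matrix `A`. -/
def Phi (A : Matrix E E (ZMod 2)) : Set (Finset E) :=
  {U : Finset E | IsUnit (A.submatrix (fun i : ↥U => (i : E)) (fun j : ↥U => (j : E))).det}

/-- The symmetric exchange axiom. -/
def SEAxiom (Φ : Set (Finset E)) : Prop :=
  ∀ φ₁ ∈ Φ, ∀ φ₂ ∈ Φ, ∀ e ∈ φ₁ ∆ φ₂, ∃ e' ∈ φ₁ ∆ φ₂, φ₁ ∆ ({e, e'} : Finset E) ∈ Φ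

/-- Binary delta-matroid: a twist of a nondegeneracy set system. -/
def IsBinaryDM (Φ : Set (Finset E)) : Prop :=
  ∃ (A : Matrix E E (ZMod 2)) (E' : Finset E), A.IsSymm ∧ Φ = (· ∆ E') '' Phi A

/-- The involution `σ_e` swapping `e` and `e^∨`. -/
def sigmaE (e : E) : V E →ₗ[ZMod 2] V E where
  toFun u := (fun f => if f = e then u.2 f else u.1 f, fun f => if f = e then u.1 f else u.2 f)
  map_add' u v := by ext f <;> dsimp <;> split <;> rfl
  map_smul' c u := by ext f <;> dsimp <;> split <;> rfl

/-- Composition of the `σ_e` over `e ∈ E'`. -/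
def sigmaSet (E' : Finset E) : V E →ₗ[ZMod 2] V E where
  toFun u := (fun f => if f ∈ E' then u.2 f else u.1 f, fun f => if f ∈ E' then u.1 f else u.2 f)
  map_add' u v := by ext f <;> dsimp <;> split <;> rfl
  map_smul' c u := by ext f <;> dsimp <;> split <;> rfl

/-- A Lagrangian subspace is graphic if for every `e` there is `v_e ∈ L` with
`ω(v_e,e)=1` and `ω(v_e,e')=0` for `e' ≠ e`. -/
def IsGraphic (L : Submodule (ZMod 2) (V E)) : Prop :=
  ∀ e : E, ∃ v ∈ L, omegaForm v (baseV e) = 1 ∧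
    ∀ e' : E, e' ≠ e → omegaForm v (baseV e') = 0

/-- The vector `e^∨ + Σ_{e'} A_{e,e'} e'`. -/
def rowVec (A : Matrix E E (ZMod 2)) (e : E) : V E := (A e, Pi.single e 1)

/-- The subspace spanned by the vectors `rowVec A e`, `e ∈ E`. -/
def graphOf (A : Matrix E E (ZMod 2)) : Submodule (ZMod 2) (V E) :=
  Submodule.span (ZMod 2) (Set.range (rowVec A))

/-- The first Vassiliev move: `e^∨ ↦ e^∨ + e'`, `e'^∨ ↦ e'^∨ + e`, fixing other basis vectors. -/
def vassiliev1 (e e' : E) : V E →ₗ[ZMod 2] V E where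
  toFun u := (fun f => u.1 f + (if f = e' then u.2 e else 0) + (if f = e then u.2 e' else 0), u.2)
  map_add' u v := by ext f <;> dsimp <;> split_ifs <;> ring
  map_smul' c u := by ext f <;> dsimp <;> split_ifs <;> ring

section DeltaMatroidProof

variable {E : Type*} [Fintype E] [DecidableEq E]

set_option linter.unusedSectionVars false in
private lemma DM_bridge (A : Matrix E E (ZMod 2)) (Y : Finset E) (c : E → ZMod 2)
    (hc : ∀ f, f ∉ Y → c f = 0) (i : ↥Y) :
    (A.submatrix (fun i : ↥Y => (i : E)) (fun j : ↥Y => (j : E))).mulVec (fun j : ↥Y => c j) i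
      = A.mulVec c i := by
  simp only [Matrix.mulVec, dotProduct, Matrix.submatrix_apply]
  have h1 : ∑ x : ↥Y, A (i : E) x * c x = ∑ x ∈ Y, A (i : E) x * c x :=
    Finset.sum_coe_sort (s := Y) (f := fun j => A (i : E) j * c j)
  rw [h1]
  refine Finset.sum_subset (Finset.subset_univ Y) ?_
  intro x _ hx
  rw [hc x hx, mul_zero]

/-- The injectivity condition equivalent to invertibility of the principal submatrix. -/
private def DM_Pcond (A : Matrix E E (ZMod 2)) (Y : Finset E) : Prop :=
  ∀ c : E → ZMod 2, (∀ f, f ∉ Y → c f = 0) → (∀ f ∈ Y, A.mulVec c f = 0) → c = 0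

private lemma DM_mem_phi_iff (A : Matrix E E (ZMod 2)) (Y : Finset E) :
    Y ∈ Phi A ↔ DM_Pcond A Y := by
  rw [Phi, Set.mem_setOf_eq, isUnit_iff_ne_zero, Ne, ← Matrix.exists_mulVec_eq_zero_iff]
  push_neg
  constructor
  · intro h c hc1 hc2
    by_contra hc
    obtain ⟨f, hf⟩ : ∃ f, c f ≠ 0 := Function.ne_iff.mp hc
    have hfY : f ∈ Y := by by_contra hfY; exact hf (hc1 f hfY)
    refine h (fun j : ↥Y => c j) (fun h' => hf (congrFun h' ⟨f, hfY⟩)) ?_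
    funext i
    rw [DM_bridge A Y c hc1 i]
    simpa using hc2 i i.2
  · intro h v hv hMv
    set c : E → ZMod 2 := fun f => if hf : f ∈ Y then v ⟨f, hf⟩ else 0 with hcdef
    have hc1 : ∀ f, f ∉ Y → c f = 0 := fun f hf => by simp [hcdef, hf]
    have hcv : (fun j : ↥Y => c j) = v := by
      funext j; simp [hcdef, j.2]
    have hc2 : ∀ f ∈ Y, A.mulVec c f = 0 := by
      intro f hf
      have := DM_bridge A Y c hc1 ⟨f, hf⟩
      rw [hcv, hMv] at this
      simpa using this.symm
    have hc0 := h c hc1 hc2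
    obtain ⟨j, hj⟩ := Function.ne_iff.mp hv
    exact hj (by rw [← congrFun hcv j, hc0]; rfl)

private lemma DM_empty_mem_phi (A : Matrix E E (ZMod 2)) : (∅ : Finset E) ∈ Phi A := by
  haveI : IsEmpty (↥(∅ : Finset E)) := Finset.isEmpty_coe_sort.mpr rfl
  rw [Phi, Set.mem_setOf_eq, Matrix.det_isEmpty]
  exact isUnit_one

set_option linter.unusedSectionVars false in
private lemma DM_pcond_twist (A B : Matrix E E (ZMod 2)) (S : Finset E)
    (hg : ∀ p q : E → ZMod 2,
      A.mulVec (fun f => if f ∈ S then p f else q f) = (fun f => if f ∈ S then q f else p f)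
      ↔ p = B.mulVec q)
    (Y : Finset E) : DM_Pcond B Y ↔ DM_Pcond A (Y ∆ S) := by
  constructor
  · intro hB c hc1 hc2
    set x := A.mulVec c with hx
    set p : E → ZMod 2 := fun f => if f ∈ S then c f else x f with hp
    set q : E → ZMod 2 := fun f => if f ∈ S then x f else c f with hq
    have hy : (fun f => if f ∈ S then p f else q f) = c := by
      funext f; by_cases h : f ∈ S <;> simp [hp, hq, h]
    have hxq : (fun f => if f ∈ S then q f else p f) = x := by
      funext f; by_cases h : f ∈ S <;> simp [hp, hq, h]
    have hpq : p = B.mulVec q := (hg p q).mp (by rw [hy, hxq])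
    have hq0 : q = 0 := by
      apply hB q
      · intro f hf
        by_cases h : f ∈ S
        · have : f ∈ Y ∆ S := Finset.mem_symmDiff.mpr (Or.inr ⟨h, hf⟩)
          simp [hq, h, hc2 f this]
        · have : f ∉ Y ∆ S := by
            rw [Finset.mem_symmDiff]; push_neg
            exact ⟨fun hY => absurd hY hf, fun hS => absurd hS h⟩
          simp [hq, h, hc1 f this]
      · intro f hf
        rw [← hpq]
        by_cases h : f ∈ S
        · have : f ∉ Y ∆ S := by
            rw [Finset.mem_symmDiff]; push_neg; exact ⟨fun _ => h, fun _ => hf⟩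
          simp [hp, h, hc1 f this]
        · have : f ∈ Y ∆ S := Finset.mem_symmDiff.mpr (Or.inl ⟨hf, h⟩)
          simp [hp, h, hc2 f this]
    have hp0 : p = 0 := by rw [hpq, hq0, Matrix.mulVec_zero]
    funext f
    by_cases h : f ∈ S
    · have := congrFun hp0 f; simpa [hp, h] using this
    · have := congrFun hq0 f; simpa [hq, h] using this
  · intro hA q hq1 hq2
    set p := B.mulVec q with hpdef
    set c : E → ZMod 2 := fun f => if f ∈ S then p f else q f with hc
    set x : E → ZMod 2 := fun f => if f ∈ S then q f else p f with hxdef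
    have hAc : A.mulVec c = x := (hg p q).mpr rfl
    have hc0 : c = 0 := by
      apply hA c
      · intro f hf
        rw [Finset.mem_symmDiff] at hf; push_neg at hf
        by_cases h : f ∈ S
        · have hfY : f ∈ Y := hf.2 h
          simp [hc, h, hq2 f hfY]
        · have hfY : f ∉ Y := fun hfY => h (hf.1 hfY)
          simp [hc, h, hq1 f hfY]
      · intro f hf
        rw [hAc]
        rw [Finset.mem_symmDiff] at hf
        rcases hf with ⟨hfY, hfS⟩ | ⟨hfS, hfY⟩
        · simp [hxdef, hfS, hq2 f hfY]
        · simp [hxdef, hfS, hq1 f hfY]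
    have hx0 : x = 0 := by rw [← hAc, hc0, Matrix.mulVec_zero]
    funext f
    by_cases h : f ∈ S
    · have := congrFun hx0 f; simpa [hxdef, h] using this
    · have := congrFun hc0 f; simpa [hc, h] using this

/-- Principal pivot on a single element `e` with `A e e = 1`. -/
private def DM_piv1 (A : Matrix E E (ZMod 2)) (e : E) : Matrix E E (ZMod 2) := fun f g =>
  if f = e then (if g = e then 1 else A e g)
  else (if g = e then A f e else A f g + A f e * A e g)

set_option linter.unusedSectionVars false in
private lemma DM_piv1_symm (A : Matrix E E (ZMod 2)) (hA : A.IsSymm) (e : E) :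
    (DM_piv1 A e).IsSymm := by
  rw [Matrix.IsSymm]
  ext f g
  have h := fun i j => hA.apply i j
  by_cases hf : f = e <;> by_cases hg : g = e <;>
    simp [DM_piv1, Matrix.transpose_apply, hf, hg] <;>
    simp [h e g, h e f, h f g] <;> ring

set_option linter.unusedSectionVars false in
private lemma DM_glemma1 (A : Matrix E E (ZMod 2)) (e : E) (he : A e e = 1) (p q : E → ZMod 2) :
    (A.mulVec (fun f => if f = e then p f else q f) = fun f => if f = e then q f else p f)
    ↔ p = (DM_piv1 A e).mulVec q := by
  have h2 : (2 : ZMod 2) = 0 := by decide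
  set s : E → ZMod 2 := fun f => ∑ g ∈ Finset.univ.erase e, A f g * q g with hs
  have key : ∀ f, A.mulVec (fun g => if g = e then p g else q g) f = A f e * p e + s f := by
    intro f
    simp only [Matrix.mulVec, dotProduct]
    rw [← Finset.add_sum_erase _ _ (Finset.mem_univ e)]
    congr 1
    · simp
    · refine Finset.sum_congr rfl fun g hg => ?_
      rw [if_neg (Finset.ne_of_mem_erase hg)]
  have keyB : ∀ f, (DM_piv1 A e).mulVec q f
      = DM_piv1 A e f e * q e + ∑ g ∈ Finset.univ.erase e, DM_piv1 A e f g * q g := by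
    intro f
    simp only [Matrix.mulVec, dotProduct]
    rw [← Finset.add_sum_erase _ _ (Finset.mem_univ e)]
  have hBe : (DM_piv1 A e).mulVec q e = q e + s e := by
    rw [keyB]
    congr 1
    · simp [DM_piv1]
    · refine Finset.sum_congr rfl fun g hg => ?_
      have hg' := Finset.ne_of_mem_erase hg
      simp [DM_piv1, hg']
  have hBf : ∀ f, f ≠ e → (DM_piv1 A e).mulVec q f = A f e * q e + (s f + A f e * s e) := by
    intro f hf
    rw [keyB]
    have hsum : ∑ g ∈ Finset.univ.erase e, DM_piv1 A e f g * q g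
        = ∑ g ∈ Finset.univ.erase e, (A f g * q g + A f e * (A e g * q g)) := by
      refine Finset.sum_congr rfl fun g hg => ?_
      have hg' := Finset.ne_of_mem_erase hg
      simp [DM_piv1, hf, hg']
      ring
    rw [hsum, Finset.sum_add_distrib, ← Finset.mul_sum]
    congr 1
    simp [DM_piv1, hf]
  constructor
  · intro h
    have hh : ∀ f, A f e * p e + s f = (if f = e then q f else p f) := fun f => by
      rw [← key f]; exact congrFun h f
    have hhe := hh e
    rw [if_pos rfl] at hhe
    funext f
    by_cases hf : f = e
    · subst hf
      rw [hBe]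
      linear_combination hhe - p f * he - s f * h2
    · have hhf := hh f
      rw [if_neg hf] at hhf
      rw [hBf f hf]
      linear_combination -hhf + A f e * hhe - (A f e * p e) * he - (A f e * s e) * h2
  · intro h
    have hbe : p e = q e + s e := by rw [congrFun h e, hBe]
    funext f
    rw [key f]
    by_cases hf : f = e
    · subst hf
      rw [if_pos rfl]
      linear_combination hbe + p f * he + s f * h2
    · have hbf : p f = A f e * q e + (s f + A f e * s e) := by rw [congrFun h f, hBf f hf]
      rw [if_neg hf]
      linear_combination -hbf + A f e * hbe

/-- Principal pivot on a pair `{e, e'}` with zero diagonal and `A e e' = 1`. -/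
private def DM_piv2 (A : Matrix E E (ZMod 2)) (e e' : E) : Matrix E E (ZMod 2) := fun f g =>
  if f = e then (if g = e then 0 else if g = e' then 1 else A e' g)
  else if f = e' then (if g = e then 1 else if g = e' then 0 else A e g)
  else (if g = e then A f e' else if g = e' then A f e
        else A f g + A f e * A e' g + A f e' * A e g)

set_option linter.unusedSectionVars false in
private lemma DM_piv2_symm (A : Matrix E E (ZMod 2)) (hA : A.IsSymm) (e e' : E) :
    (DM_piv2 A e e').IsSymm := by
  have h := fun i j => hA.apply i j
  apply Matrix.IsSymm.ext
  intro i j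
  simp only [DM_piv2]
  split_ifs <;> subst_vars <;> try simp_all
  all_goals try ring
  all_goals simp [h e j, h e' j, h e i, h e' i, h i j]
  all_goals ring

set_option linter.unusedSectionVars false in
private lemma DM_glemma2 (A : Matrix E E (ZMod 2)) (e e' : E) (hne : e' ≠ e)
    (hee : A e e = 0) (he'e' : A e' e' = 0) (hee' : A e e' = 1) (he'e : A e' e = 1)
    (p q : E → ZMod 2) :
    (A.mulVec (fun f => if f = e ∨ f = e' then p f else q f)
      = fun f => if f = e ∨ f = e' then q f else p f)
    ↔ p = (DM_piv2 A e e').mulVec q := by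
  have h2 : (2 : ZMod 2) = 0 := by decide
  have he'm : e' ∈ Finset.univ.erase e := Finset.mem_erase.mpr ⟨hne, Finset.mem_univ e'⟩
  set s : E → ZMod 2 :=
    fun f => ∑ g ∈ (Finset.univ.erase e).erase e', A f g * q g with hs
  have key : ∀ f, A.mulVec (fun g => if g = e ∨ g = e' then p g else q g) f
      = A f e * p e + A f e' * p e' + s f := by
    intro f
    simp only [Matrix.mulVec, dotProduct]
    rw [← Finset.add_sum_erase _ _ (Finset.mem_univ e), ← Finset.add_sum_erase _ _ he'm,
      ← add_assoc]
    have t1 : (if (e : E) = e ∨ e = e' then p e else q e) = p e := if_pos (Or.inl rfl)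
    have t2 : (if (e' : E) = e ∨ e' = e' then p e' else q e') = p e' := if_pos (Or.inr rfl)
    rw [t1, t2]
    congr 1
    refine Finset.sum_congr rfl fun g hg => ?_
    have hg1 : g ≠ e' := Finset.ne_of_mem_erase hg
    have hg2 : g ≠ e := Finset.ne_of_mem_erase (Finset.mem_of_mem_erase hg)
    rw [if_neg (by simp [hg1, hg2])]
  have keyB : ∀ f, (DM_piv2 A e e').mulVec q f
      = DM_piv2 A e e' f e * q e + DM_piv2 A e e' f e' * q e'
        + ∑ g ∈ (Finset.univ.erase e).erase e', DM_piv2 A e e' f g * q g := by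
    intro f
    simp only [Matrix.mulVec, dotProduct]
    rw [← Finset.add_sum_erase _ _ (Finset.mem_univ e), ← Finset.add_sum_erase _ _ he'm,
      ← add_assoc]
  have hBe : (DM_piv2 A e e').mulVec q e = q e' + s e' := by
    rw [keyB]
    have : ∑ g ∈ (Finset.univ.erase e).erase e', DM_piv2 A e e' e g * q g = s e' := by
      refine Finset.sum_congr rfl fun g hg => ?_
      have hg1 : g ≠ e' := Finset.ne_of_mem_erase hg
      have hg2 : g ≠ e := Finset.ne_of_mem_erase (Finset.mem_of_mem_erase hg)
      simp [DM_piv2, hg1, hg2]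
    rw [this]
    simp [DM_piv2, hne]
  have hBe' : (DM_piv2 A e e').mulVec q e' = q e + s e := by
    rw [keyB]
    have : ∑ g ∈ (Finset.univ.erase e).erase e', DM_piv2 A e e' e' g * q g = s e := by
      refine Finset.sum_congr rfl fun g hg => ?_
      have hg1 : g ≠ e' := Finset.ne_of_mem_erase hg
      have hg2 : g ≠ e := Finset.ne_of_mem_erase (Finset.mem_of_mem_erase hg)
      simp [DM_piv2, hg1, hg2, hne]
    rw [this]
    simp [DM_piv2, hne]
  have hBf : ∀ f, f ≠ e → f ≠ e' → (DM_piv2 A e e').mulVec q f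
      = A f e' * q e + A f e * q e' + (s f + A f e * s e' + A f e' * s e) := by
    intro f hf hf'
    rw [keyB]
    have hsum : ∑ g ∈ (Finset.univ.erase e).erase e', DM_piv2 A e e' f g * q g
        = ∑ g ∈ (Finset.univ.erase e).erase e',
            (A f g * q g + A f e * (A e' g * q g) + A f e' * (A e g * q g)) := by
      refine Finset.sum_congr rfl fun g hg => ?_
      have hg1 : g ≠ e' := Finset.ne_of_mem_erase hg
      have hg2 : g ≠ e := Finset.ne_of_mem_erase (Finset.mem_of_mem_erase hg)
      simp [DM_piv2, hf, hf', hg1, hg2]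
      ring
    rw [hsum, Finset.sum_add_distrib, Finset.sum_add_distrib, ← Finset.mul_sum, ← Finset.mul_sum]
    have h1 : DM_piv2 A e e' f e = A f e' := by simp [DM_piv2, hf, hf']
    have h2' : DM_piv2 A e e' f e' = A f e := by simp [DM_piv2, hf, hf', hne]
    rw [h1, h2']
  constructor
  · intro h
    have hh : ∀ f, A f e * p e + A f e' * p e' + s f = (if f = e ∨ f = e' then q f else p f) :=
      fun f => by rw [← key f]; exact congrFun h f
    have hhe := hh e
    rw [if_pos (Or.inl rfl)] at hhe
    have hhe' := hh e'
    rw [if_pos (Or.inr rfl)] at hhe'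
    have hpe : p e = q e' + s e' := by
      linear_combination hhe' - p e * he'e - p e' * he'e' - s e' * h2
    have hpe' : p e' = q e + s e := by
      linear_combination hhe - p e' * hee' - p e * hee - s e * h2
    funext f
    by_cases hf : f = e
    · subst hf; rw [hBe]; exact hpe
    by_cases hf' : f = e'
    · subst hf'; rw [hBe']; exact hpe'
    have hhf := hh f
    rw [if_neg (by simp [hf, hf'])] at hhf
    rw [hBf f hf hf']
    linear_combination -hhf + A f e * hpe + A f e' * hpe'
  · intro h
    have hpe : p e = q e' + s e' := by rw [congrFun h e, hBe]
    have hpe' : p e' = q e + s e := by rw [congrFun h e', hBe']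
    funext f
    rw [key f]
    by_cases hf : f = e
    · subst hf
      rw [if_pos (Or.inl rfl)]
      linear_combination hpe' + p f * hee + p e' * hee' + s f * h2
    by_cases hf' : f = e'
    · subst hf'
      rw [if_pos (Or.inr rfl)]
      linear_combination hpe + p f * he'e' + p e * he'e + s f * h2
    rw [if_neg (by simp [hf, hf'])]
    have hpf : p f = A f e' * q e + A f e * q e' + (s f + A f e * s e' + A f e' * s e) := by
      rw [congrFun h f, hBf f hf hf']
    linear_combination -hpf + A f e * hpe + A f e' * hpe'

private lemma DM_piv1_phi (A : Matrix E E (ZMod 2)) (e : E) (he : A e e = 1) (Y : Finset E) :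
    Y ∈ Phi (DM_piv1 A e) ↔ Y ∆ ({e} : Finset E) ∈ Phi A := by
  rw [DM_mem_phi_iff, DM_mem_phi_iff]
  refine DM_pcond_twist A (DM_piv1 A e) {e} (fun p q => ?_) Y
  have := DM_glemma1 A e he p q
  simpa only [Finset.mem_singleton] using this

private lemma DM_piv2_phi (A : Matrix E E (ZMod 2)) (e e' : E) (hne : e' ≠ e)
    (hee : A e e = 0) (he'e' : A e' e' = 0) (hee' : A e e' = 1) (he'e : A e' e = 1)
    (Y : Finset E) :
    Y ∈ Phi (DM_piv2 A e e') ↔ Y ∆ ({e, e'} : Finset E) ∈ Phi A := by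
  rw [DM_mem_phi_iff, DM_mem_phi_iff]
  refine DM_pcond_twist A (DM_piv2 A e e') {e, e'} (fun p q => ?_) Y
  have := DM_glemma2 A e e' hne hee he'e' hee' he'e p q
  simpa only [Finset.mem_insert, Finset.mem_singleton] using this

private lemma DM_row_ne (B : Matrix E E (ZMod 2)) (hB : B.IsSymm) (W : Finset E)
    (hW : W ∈ Phi B) (e : E) (he : e ∈ W) : ∃ e' ∈ W, B e e' ≠ 0 := by
  by_contra hcon
  push_neg at hcon
  have hp := (DM_mem_phi_iff B W).mp hW
  set c : E → ZMod 2 := fun g => if g = e then 1 else 0 with hcdef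
  have hc1 : ∀ f, f ∉ W → c f = 0 := by
    intro f hf
    have : f ≠ e := fun h' => hf (h' ▸ he)
    simp [hcdef, this]
  have hc2 : ∀ f ∈ W, B.mulVec c f = 0 := by
    intro f hf
    have hBc : B.mulVec c f = B f e := by
      simp [hcdef, Matrix.mulVec, dotProduct, mul_ite]
    rw [hBc, hB.apply e f]
    exact hcon f hf
  have := congrFun (hp c hc1 hc2) e
  simp [hcdef] at this

private lemma DM_single_mem_phi (B : Matrix E E (ZMod 2)) (e : E) (h : B e e ≠ 0) :
    ({e} : Finset E) ∈ Phi B := by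
  rw [DM_mem_phi_iff]
  intro c hc1 hc2
  have h0 := hc2 e (Finset.mem_singleton_self e)
  have hBc : B.mulVec c e = B e e * c e := by
    simp only [Matrix.mulVec, dotProduct]
    rw [← Finset.add_sum_erase _ _ (Finset.mem_univ e)]
    have : ∑ g ∈ Finset.univ.erase e, B e g * c g = 0 :=
      Finset.sum_eq_zero fun g hg => by
        rw [hc1 g (by simp [Finset.ne_of_mem_erase hg]), mul_zero]
    rw [this, add_zero]
  rw [hBc] at h0
  have hce : c e = 0 := by
    rcases mul_eq_zero.mp h0 with h' | h'
    · exact absurd h' h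
    · exact h'
  funext f
  by_cases hf : f = e
  · subst hf; exact hce
  · exact hc1 f (by simp [hf])

private lemma DM_pair_mem_phi (B : Matrix E E (ZMod 2)) (e e' : E) (hne : e' ≠ e)
    (h0 : B e e = 0) (h1 : B e e' ≠ 0) (h1' : B e' e ≠ 0) :
    ({e, e'} : Finset E) ∈ Phi B := by
  rw [DM_mem_phi_iff]
  intro c hc1 hc2
  have he'm : e' ∈ Finset.univ.erase e := Finset.mem_erase.mpr ⟨hne, Finset.mem_univ e'⟩
  have key : ∀ f, B.mulVec c f = B f e * c e + B f e' * c e' := by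
    intro f
    simp only [Matrix.mulVec, dotProduct]
    rw [← Finset.add_sum_erase _ _ (Finset.mem_univ e), ← Finset.add_sum_erase _ _ he'm]
    have : ∑ g ∈ (Finset.univ.erase e).erase e', B f g * c g = 0 :=
      Finset.sum_eq_zero fun g hg => by
        have hg1 : g ≠ e' := Finset.ne_of_mem_erase hg
        have hg2 : g ≠ e := Finset.ne_of_mem_erase (Finset.mem_of_mem_erase hg)
        rw [hc1 g (by simp [hg1, hg2]), mul_zero]
    rw [this, add_zero]
  have he2 := hc2 e (by simp)
  rw [key, h0, zero_mul, zero_add] at he2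
  have hce' : c e' = 0 := by
    rcases mul_eq_zero.mp he2 with h' | h'
    · exact absurd h' h1
    · exact h'
  have he2' := hc2 e' (by simp)
  rw [key, hce', mul_zero, add_zero] at he2'
  have hce : c e = 0 := by
    rcases mul_eq_zero.mp he2' with h' | h'
    · exact absurd h' h1'
    · exact h'
  funext f
  by_cases hf : f = e
  · subst hf; exact hce
  by_cases hf' : f = e'
  · subst hf'; exact hce'
  exact hc1 f (by simp [hf, hf'])

private lemma DM_pivot_all :
    ∀ (U : Finset E) (A : Matrix E E (ZMod 2)), A.IsSymm → U ∈ Phi A →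
      ∃ B : Matrix E E (ZMod 2), B.IsSymm ∧ ∀ Y : Finset E, Y ∈ Phi B ↔ Y ∆ U ∈ Phi A := by
  intro U
  induction U using Finset.strongInduction with
  | _ U ih =>
    intro A hA hU
    rcases U.eq_empty_or_nonempty with rfl | ⟨e, he⟩
    · refine ⟨A, hA, fun Y => ?_⟩
      have hY : Y ∆ (∅ : Finset E) = Y := by rw [← Finset.bot_eq_empty, symmDiff_bot]
      rw [hY]
    · have hstep : ∃ (S : Finset E) (B1 : Matrix E E (ZMod 2)), S ⊆ U ∧ S.Nonempty ∧
          B1.IsSymm ∧ ∀ Y : Finset E, Y ∈ Phi B1 ↔ Y ∆ S ∈ Phi A := by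
        have hz : ∀ a : ZMod 2, a ≠ 0 → a = 1 := by decide
        have hz' : ∀ a : ZMod 2, a ≠ 1 → a = 0 := by decide
        by_cases h1 : A e e = 1
        · exact ⟨{e}, DM_piv1 A e, Finset.singleton_subset_iff.mpr he,
            Finset.singleton_nonempty e, DM_piv1_symm A hA e, DM_piv1_phi A e h1⟩
        · obtain ⟨e', he', hne0⟩ := DM_row_ne A hA U hU e he
          have hee : A e e = 0 := hz' _ h1
          have hee' : A e e' = 1 := hz _ hne0
          have hne : e' ≠ e := by
            intro h'
            subst h'
            rw [hee] at hee'
            exact one_ne_zero hee'.symm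
          by_cases h2 : A e' e' = 1
          · exact ⟨{e'}, DM_piv1 A e', Finset.singleton_subset_iff.mpr he',
              Finset.singleton_nonempty e', DM_piv1_symm A hA e', DM_piv1_phi A e' h2⟩
          · have he'e' : A e' e' = 0 := hz' _ h2
            have he'e : A e' e = 1 := by rw [hA.apply e e']; exact hee'
            refine ⟨{e, e'}, DM_piv2 A e e', ?_, ⟨e, by simp⟩,
              DM_piv2_symm A hA e e', DM_piv2_phi A e e' hne hee he'e' hee' he'e⟩
            intro x hx
            rcases Finset.mem_insert.mp hx with rfl | hx'
            · exact he
            · rw [Finset.mem_singleton.mp hx']; exact he'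
      obtain ⟨S, B1, hSU, hSne, hB1s, hB1⟩ := hstep
      have hUS : (U \ S) ∆ S = U := by
        rw [sdiff_symmDiff_eq_sup, sup_eq_left.mpr hSU]
      have hU' : U \ S ∈ Phi B1 := (hB1 _).mpr (by rw [hUS]; exact hU)
      obtain ⟨B, hBs, hB⟩ := ih (U \ S) (Finset.sdiff_ssubset hSU hSne) B1 hB1s hU'
      refine ⟨B, hBs, fun Y => ?_⟩
      rw [hB Y, hB1, symmDiff_assoc, hUS]

end DeltaMatroidProof

/-- The nondegeneracy set system of a symmetric matrix over `𝔽₂` is a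
delta-matroid: it is proper (`∅` is feasible) and satisfies the symmetric exchange axiom. -/
theorem stmt0 (A : Matrix E E (ZMod 2)) (hA : A.IsSymm) :
    (∅ : Finset E) ∈ Phi A ∧ SEAxiom (Phi A) := by
  refine ⟨DM_empty_mem_phi A, ?_⟩
  intro φ₁ h₁ φ₂ h₂ e he
  obtain ⟨B, hBs, hBphi⟩ := DM_pivot_all φ₁ A hA h₁
  have hW : (φ₁ ∆ φ₂) ∈ Phi B := by
    refine (hBphi _).mpr ?_
    rwa [symmDiff_comm, symmDiff_symmDiff_cancel_left]
  by_cases hdiag : B e e = 0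
  · obtain ⟨e', he', hne0⟩ := DM_row_ne B hBs _ hW e he
    have hne : e' ≠ e := fun h' => hne0 (by rw [h']; exact hdiag)
    refine ⟨e', he', ?_⟩
    have hp : ({e, e'} : Finset E) ∈ Phi B :=
      DM_pair_mem_phi B e e' hne hdiag hne0 (by rw [hBs.apply e e']; exact hne0)
    have := (hBphi _).mp hp
    rwa [symmDiff_comm] at this
  · refine ⟨e, he, ?_⟩
    have hp : ({e, e} : Finset E) ∈ Phi B := by
      rw [show ({e, e} : Finset E) = {e} by simp]
      exact DM_single_mem_phi B e hdiag
    have := (hBphi _).mp hp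
    rwa [symmDiff_comm] at this
end

section
/- Let E be a finite set. The mapping ν_E, sending a Lagrangian subspace L ⊆ V_E to the set system (E; Ψ_L) with Ψ_L = {Y ⊆ E : L ∩ span({e^∨ : e ∈ Y} ∪ {e : e ∈ E \ Y}) = {0}}, is a bijection between the set 𝓛_E of Lagrangian subspaces of V_E and the set 𝓑_E of binary delta-matroids on the ground set E. -/
open Finset
open scoped symmDiff

variable {E : Type*} [Fintype E] [DecidableEq E]

section Aux
variable {E : Type*} [Fintype E] [DecidableEq E]

/-- Explicit description of `coordSpan`. -/
def coordSub (Y : Finset E) : Submodule (ZMod 2) (V E) where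
  carrier := {v | (∀ e ∈ Y, v.1 e = 0) ∧ (∀ e ∉ Y, v.2 e = 0)}
  add_mem' := by
    rintro a b ⟨h1, h2⟩ ⟨h3, h4⟩
    exact ⟨fun e he => by simp [h1 e he, h3 e he],
           fun e he => by simp [h2 e he, h4 e he]⟩
  zero_mem' := ⟨fun e _ => rfl, fun e _ => rfl⟩
  smul_mem' := by
    rintro c a ⟨h1, h2⟩
    exact ⟨fun e he => by simp [h1 e he], fun e he => by simp [h2 e he]⟩

lemma mem_coordSub {Y : Finset E} {v : V E} :
    v ∈ coordSub Y ↔ (∀ e ∈ Y, v.1 e = 0) ∧ (∀ e ∉ Y, v.2 e = 0) := Iff.rfl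

lemma coordSpan_eq (Y : Finset E) : coordSpan Y = coordSub Y := by
  apply le_antisymm
  · rw [coordSpan, Submodule.span_le]
    rintro v (⟨e, he, rfl⟩ | ⟨e, he, rfl⟩)
    · simp only [Finset.mem_coe] at he
      refine ⟨fun f hf => rfl, fun f hf => ?_⟩
      simp only [dualV, Pi.single_apply]
      rw [if_neg]; rintro rfl; exact hf he
    · simp only [Finset.coe_compl, Set.mem_compl_iff, Finset.mem_coe] at he
      refine ⟨fun f hf => ?_, fun f hf => rfl⟩
      simp only [baseV, Pi.single_apply]
      rw [if_neg]; rintro rfl; exact he hf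
  · rintro v ⟨h1, h2⟩
    have hv : v = (∑ e ∈ Yᶜ, v.1 e • baseV e) + (∑ e ∈ Y, v.2 e • dualV e) := by
      have fst : (∑ e ∈ Yᶜ, v.1 e • baseV e).1 = v.1 := by
        funext f
        rw [Prod.fst_sum]
        simp only [Prod.smul_fst, baseV, Finset.sum_apply, Pi.smul_apply, Pi.single_apply,
          smul_eq_mul, mul_ite, mul_one, mul_zero]
        rw [Finset.sum_ite_eq Yᶜ f v.1]
        by_cases hf : f ∈ Y
        · simp [hf, h1 f hf]
        · simp [hf]
      have snd : (∑ e ∈ Y, v.2 e • dualV e).2 = v.2 := by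
        funext f
        rw [Prod.snd_sum]
        simp only [Prod.smul_snd, dualV, Finset.sum_apply, Pi.smul_apply, Pi.single_apply,
          smul_eq_mul, mul_ite, mul_one, mul_zero]
        rw [Finset.sum_ite_eq Y f v.2]
        by_cases hf : f ∈ Y
        · simp [hf]
        · simp [hf, h2 f hf]
      ext f
      · rw [Prod.fst_add, fst]
        have : (∑ e ∈ Y, v.2 e • dualV e).1 = 0 := by
          rw [Prod.fst_sum]
          simp [dualV]
        simp [this]
      · rw [Prod.snd_add, snd]
        have : (∑ e ∈ Yᶜ, v.1 e • baseV e).2 = 0 := by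
          rw [Prod.snd_sum]
          simp [baseV]
        simp [this]
    rw [hv]
    refine Submodule.add_mem _ (Submodule.sum_mem _ fun e he => ?_)
      (Submodule.sum_mem _ fun e he => ?_)
    · exact Submodule.smul_mem _ _ (Submodule.subset_span (Or.inr ⟨e, by simpa using he, rfl⟩))
    · exact Submodule.smul_mem _ _ (Submodule.subset_span (Or.inl ⟨e, by simpa using he, rfl⟩))

end Aux
section Aux2
variable {E : Type*} [Fintype E] [DecidableEq E]

lemma omega_add_left (u v w : V E) :
    omegaForm (u + v) w = omegaForm u w + omegaForm v w := by
  rw [omegaForm, omegaForm, omegaForm, ← Finset.sum_add_distrib]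
  exact Finset.sum_congr rfl fun e _ => by simp [Prod.fst_add, Prod.snd_add]; ring

lemma omega_add_right (u v w : V E) :
    omegaForm u (v + w) = omegaForm u v + omegaForm u w := by
  rw [omegaForm, omegaForm, omegaForm, ← Finset.sum_add_distrib]
  exact Finset.sum_congr rfl fun e _ => by simp [Prod.fst_add, Prod.snd_add]; ring

lemma omega_smul_left (c : ZMod 2) (u w : V E) :
    omegaForm (c • u) w = c * omegaForm u w := by
  rw [omegaForm, omegaForm, Finset.mul_sum]
  exact Finset.sum_congr rfl fun e _ => by simp; ring

lemma omega_smul_right (c : ZMod 2) (u w : V E) :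
    omegaForm u (c • w) = c * omegaForm u w := by
  rw [omegaForm, omegaForm, Finset.mul_sum]
  exact Finset.sum_congr rfl fun e _ => by simp; ring

lemma omega_zero_left (w : V E) : omegaForm (0 : V E) w = 0 := by
  simp [omegaForm]

lemma omega_zero_right (w : V E) : omegaForm w (0 : V E) = 0 := by
  simp [omegaForm]

lemma isotropic_span {s : Set (V E)}
    (h : ∀ u ∈ s, ∀ v ∈ s, omegaForm u v = 0) :
    ∀ u ∈ Submodule.span (ZMod 2) s, ∀ v ∈ Submodule.span (ZMod 2) s, omegaForm u v = 0 := by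
  intro u hu v hv
  refine Submodule.span_induction₂ (p := fun x y _ _ => omegaForm x y = 0)
    (fun x y hx hy => h x hx y hy) (fun y _ => omega_zero_left y) (fun x _ => omega_zero_right x)
    ?_ ?_ ?_ ?_ hu hv
  · intro x y z _ _ _ h1 h2; rw [omega_add_left, h1, h2, add_zero]
  · intro x y z _ _ _ h1 h2; rw [omega_add_right, h1, h2, add_zero]
  · intro r x y _ _ h1; rw [omega_smul_left, h1, mul_zero]
  · intro r x y _ _ h1; rw [omega_smul_right, h1, mul_zero]

lemma sigma_sigma (E' : Finset E) (v : V E) : sigmaSet E' (sigmaSet E' v) = v := by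
  ext f <;> simp only [sigmaSet, LinearMap.coe_mk, AddHom.coe_mk] <;> split <;> simp_all

lemma sigma_injective (E' : Finset E) : Function.Injective (sigmaSet E' : V E →ₗ[ZMod 2] V E) :=
  Function.LeftInverse.injective (sigma_sigma E')

lemma omega_sigma (E' : Finset E) (u v : V E) :
    omegaForm (sigmaSet E' u) (sigmaSet E' v) = omegaForm u v := by
  refine Finset.sum_congr rfl fun e _ => ?_
  simp only [sigmaSet, LinearMap.coe_mk, AddHom.coe_mk]
  split <;> ring

lemma sigma_mem_coordSub (E' Y : Finset E) (v : V E) :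
    sigmaSet E' v ∈ coordSub (Y ∆ E') ↔ v ∈ coordSub Y := by
  simp only [mem_coordSub, sigmaSet, LinearMap.coe_mk, AddHom.coe_mk]
  constructor
  · rintro ⟨h1, h2⟩
    constructor
    · intro e he
      by_cases he' : e ∈ E'
      · have := h2 e (by simp [Finset.mem_symmDiff, he, he'])
        simpa [he'] using this
      · have := h1 e (by simp [Finset.mem_symmDiff, he, he'])
        simpa [he'] using this
    · intro e he
      by_cases he' : e ∈ E'
      · have := h1 e (by simp [Finset.mem_symmDiff, he, he'])
        simpa [he'] using this
      · have := h2 e (by simp [Finset.mem_symmDiff, he, he'])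
        simpa [he'] using this
  · rintro ⟨h1, h2⟩
    constructor
    · intro e he
      rw [Finset.mem_symmDiff] at he
      rcases he with ⟨he, he'⟩ | ⟨he', he⟩
      · simp [he', h1 e he]
      · simp [he', h2 e he]
    · intro e he
      rw [Finset.mem_symmDiff] at he
      push_neg at he
      by_cases he' : e ∈ E'
      · simp [he', h1 e (he.2 he')]
      · simp [he', h2 e (fun h => he' (he.1 h))]

lemma map_sigma_coordSub (E' Y : Finset E) :
    Submodule.map (sigmaSet E') (coordSub Y) = coordSub (Y ∆ E') := by
  apply le_antisymm
  · rintro _ ⟨v, hv, rfl⟩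
    exact (sigma_mem_coordSub E' Y v).2 hv
  · intro v hv
    refine ⟨sigmaSet E' v, ?_, sigma_sigma E' v⟩
    have h2 := sigma_mem_coordSub E' (Y ∆ E') v
    rw [symmDiff_symmDiff_cancel_right] at h2
    exact h2.2 hv

lemma feasible_map_sigma (E' Y : Finset E) (L : Submodule (ZMod 2) (V E)) :
    Feasible (Submodule.map (sigmaSet E') L) (Y ∆ E') ↔ Feasible L Y := by
  rw [Feasible, Feasible, coordSpan_eq, coordSpan_eq, ← map_sigma_coordSub,
    ← Submodule.map_inf _ (sigma_injective E')]
  constructor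
  · intro h
    rw [Submodule.eq_bot_iff] at h ⊢
    intro x hx
    have : sigmaSet E' x ∈ Submodule.map (sigmaSet E') (L ⊓ coordSub Y) :=
      ⟨x, hx, rfl⟩
    have := h _ this
    have := sigma_injective E' (a₁ := x) (a₂ := 0) (by simpa using this)
    exact this
  · intro h; rw [h, Submodule.map_bot]

lemma nu_map_sigma (E' : Finset E) (L : Submodule (ZMod 2) (V E)) :
    nu (Submodule.map (sigmaSet E') L) = (· ∆ E') '' nu L := by
  ext Y
  constructor
  · intro hY
    refine ⟨Y ∆ E', ?_, by simpa using symmDiff_symmDiff_cancel_right Y E'⟩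
    rw [nu, Set.mem_setOf_eq] at hY ⊢
    rw [← feasible_map_sigma E', symmDiff_symmDiff_cancel_right]
    exact hY
  · rintro ⟨Z, hZ, rfl⟩
    exact (feasible_map_sigma E' Z L).2 hZ

lemma isLagrangian_map_sigma (E' : Finset E) {L : Submodule (ZMod 2) (V E)}
    (hL : IsLagrangian L) : IsLagrangian (Submodule.map (sigmaSet E') L) := by
  constructor
  · rintro _ ⟨u, hu, rfl⟩ _ ⟨v, hv, rfl⟩
    rw [omega_sigma]
    exact hL.1 u hu v hv
  · let eqv : V E ≃ₗ[ZMod 2] V E :=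
      LinearEquiv.ofLinear (sigmaSet E') (sigmaSet E')
        (LinearMap.ext fun v => sigma_sigma E' v) (LinearMap.ext fun v => sigma_sigma E' v)
    have : Submodule.map (sigmaSet E') L = Submodule.map (eqv : V E →ₗ[ZMod 2] V E) L := rfl
    rw [this]
    rw [LinearEquiv.finrank_map_eq eqv L]
    exact hL.2

lemma map_map_sigma (E' : Finset E) (L : Submodule (ZMod 2) (V E)) :
    Submodule.map (sigmaSet E') (Submodule.map (sigmaSet E') L) = L := by
  apply le_antisymm
  · rintro _ ⟨_, ⟨v, hv, rfl⟩, rfl⟩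
    rw [sigma_sigma]; exact hv
  · intro v hv
    exact ⟨sigmaSet E' v, ⟨v, hv, rfl⟩, sigma_sigma E' v⟩

end Aux2
section Aux3
variable {E : Type*} [Fintype E] [DecidableEq E]

lemma zmod2_cases : ∀ a : ZMod 2, a = 0 ∨ a = 1 := by decide

lemma zmod2_add_eq_zero : ∀ a b : ZMod 2, a + b = 0 → a = b := by decide

lemma rowVec_sum (A : Matrix E E (ZMod 2)) (hA : A.IsSymm) (x : E → ZMod 2) :
    (A.mulVec x, x) = ∑ e, x e • rowVec A e := by
  ext f
  · rw [Prod.fst_sum]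
    simp only [rowVec, Prod.smul_fst, Finset.sum_apply, Pi.smul_apply, smul_eq_mul]
    rw [Matrix.mulVec, dotProduct]
    exact Finset.sum_congr rfl fun e _ => by rw [hA.apply f e]; ring
  · rw [Prod.snd_sum]
    simp only [rowVec, Prod.smul_snd, Finset.sum_apply, Pi.smul_apply, Pi.single_apply,
      smul_eq_mul, mul_ite, mul_one, mul_zero]
    rw [Finset.sum_ite_eq Finset.univ f x]
    simp

lemma mem_graphOf {A : Matrix E E (ZMod 2)} (hA : A.IsSymm) {v : V E} :
    v ∈ graphOf A ↔ v.1 = A.mulVec v.2 := by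
  constructor
  · intro hv
    induction hv using Submodule.span_induction with
    | mem x hx =>
      obtain ⟨e, rfl⟩ := hx
      simp only [rowVec, Matrix.mulVec_single, mul_one]
      funext f; rw [Pi.smul_apply, MulOpposite.op_one, one_smul, Matrix.col_apply]; exact hA.apply f e
    | zero => simp
    | add x y _ _ hx hy =>
      simp only [Prod.fst_add, Prod.snd_add, hx, hy, Matrix.mulVec_add]
    | smul c x _ hx =>
      simp only [Prod.smul_fst, Prod.smul_snd, hx, Matrix.mulVec_smul]
  · intro hv
    have : v = (A.mulVec v.2, v.2) := by rw [← hv]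
    rw [this, rowVec_sum A hA]
    exact Submodule.sum_mem _ fun e _ => Submodule.smul_mem _ _
      (Submodule.subset_span ⟨e, rfl⟩)

lemma graphOf_eq_range (A : Matrix E E (ZMod 2)) (hA : A.IsSymm) :
    graphOf A = LinearMap.range ((A.mulVecLin).prod LinearMap.id) := by
  ext v
  rw [mem_graphOf hA]
  constructor
  · intro h
    exact ⟨v.2, by ext <;> simp [h, Matrix.mulVecLin_apply]⟩
  · rintro ⟨x, rfl⟩
    simp [Matrix.mulVecLin_apply]

lemma finrank_graphOf (A : Matrix E E (ZMod 2)) (hA : A.IsSymm) :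
    Module.finrank (ZMod 2) (graphOf A) = Fintype.card E := by
  rw [graphOf_eq_range A hA, LinearMap.finrank_range_of_inj,
    Module.finrank_fintype_fun_eq_card]
  intro x y hxy
  simpa using congrArg Prod.snd hxy

lemma isLagrangian_graphOf (A : Matrix E E (ZMod 2)) (hA : A.IsSymm) :
    IsLagrangian (graphOf A) := by
  refine ⟨?_, finrank_graphOf A hA⟩
  refine isotropic_span ?_
  rintro _ ⟨e, rfl⟩ _ ⟨f, rfl⟩
  rw [omegaForm]
  have : ∀ g : E, (rowVec A e).1 g * (rowVec A f).2 g + (rowVec A e).2 g * (rowVec A f).1 g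
      = (if g = f then A e g else 0) + (if g = e then A f g else 0) := by
    intro g
    simp only [rowVec, Pi.single_apply, mul_ite, mul_one, mul_zero, ite_mul, zero_mul]
    congr 1 <;> split <;> ring
  rw [Finset.sum_congr rfl fun g _ => this g, Finset.sum_add_distrib,
    Finset.sum_ite_eq' Finset.univ f (A e), Finset.sum_ite_eq' Finset.univ e (A f)]
  simp only [Finset.mem_univ, if_true]
  rw [hA.apply e f]
  exact CharTwo.add_self_eq_zero (A e f)

end Aux3
section Aux4
variable {E : Type*} [Fintype E] [DecidableEq E]

lemma mulVec_submatrix (A : Matrix E E (ZMod 2)) (Y : Finset E) (x : E → ZMod 2)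
    (hx : ∀ e ∉ Y, x e = 0) (e : E) (he : e ∈ Y) :
    (A.submatrix (fun i : ↥Y => (i : E)) (fun j : ↥Y => (j : E))).mulVec
      (fun j : ↥Y => x j) ⟨e, he⟩ = A.mulVec x e := by
  rw [Matrix.mulVec, dotProduct, Matrix.mulVec, dotProduct]
  have h1 : ∑ j : ↥Y, A e (j : E) * x (j : E) = ∑ j ∈ Y, A e j * x j :=
    Finset.sum_coe_sort Y (fun f => A e f * x f)
  rw [show (∑ j : ↥Y, (A.submatrix (fun i : ↥Y => (i : E)) (fun j : ↥Y => (j : E)))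
      ⟨e, he⟩ j * x (j : E)) = ∑ j : ↥Y, A e (j : E) * x (j : E) from rfl, h1]
  exact Finset.sum_subset (Finset.subset_univ Y)
    (fun f _ hf => by rw [hx f hf, mul_zero])

lemma feasible_graphOf {A : Matrix E E (ZMod 2)} (hA : A.IsSymm) (Y : Finset E) :
    Feasible (graphOf A) Y ↔
      IsUnit (A.submatrix (fun i : ↥Y => (i : E)) (fun j : ↥Y => (j : E))).det := by
  set B := A.submatrix (fun i : ↥Y => (i : E)) (fun j : ↥Y => (j : E)) with hB
  rw [← Matrix.isUnit_iff_isUnit_det, ← Matrix.mulVec_injective_iff_isUnit]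
  have hker : Function.Injective B.mulVec ↔ ∀ x, B.mulVec x = 0 → x = 0 := by
    constructor
    · intro h x hx
      apply h
      rw [hx, Matrix.mulVec_zero]
    · intro h
      have hinj : Function.Injective B.mulVecLin := by
        rw [← LinearMap.ker_eq_bot, LinearMap.ker_eq_bot']
        intro m hm
        exact h m (by rw [← Matrix.mulVecLin_apply]; exact hm)
      intro x y hxy
      exact hinj (by rw [Matrix.mulVecLin_apply, Matrix.mulVecLin_apply]; exact hxy)
  rw [hker, Feasible, coordSpan_eq]
  constructor
  · intro hbot x hx
    set xe : E → ZMod 2 := fun e => if h : e ∈ Y then x ⟨e, h⟩ else 0 with hxe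
    have hxe0 : ∀ e ∉ Y, xe e = 0 := fun e he => dif_neg he
    have hvmem : (A.mulVec xe, xe) ∈ graphOf A ⊓ coordSub Y := by
      refine ⟨(mem_graphOf hA).2 rfl, fun e he => ?_, hxe0⟩
      show A.mulVec xe e = 0
      have := mulVec_submatrix A Y xe hxe0 e he
      rw [← this]
      have hxx : (fun j : ↥Y => xe (j : E)) = x := by
        funext j; simp only [hxe, dif_pos j.2]
      rw [hxx, hx]
      rfl
    rw [Submodule.eq_bot_iff] at hbot
    have := hbot _ hvmem
    have hxe_zero : xe = 0 := congrArg Prod.snd this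
    funext j
    have := congrFun hxe_zero (j : E)
    simpa [hxe, dif_pos j.2] using this
  · intro h
    rw [Submodule.eq_bot_iff]
    intro v hv
    rw [Submodule.mem_inf] at hv
    obtain ⟨hv1, hv2, hv3⟩ := hv
    rw [mem_graphOf hA] at hv1
    have hz : B.mulVec (fun j : ↥Y => v.2 (j : E)) = 0 := by
      funext j
      rw [hB, mulVec_submatrix A Y v.2 hv3 j j.2, ← hv1]
      exact hv2 _ j.2
    have := h _ hz
    have hv2z : v.2 = 0 := by
      funext e
      by_cases he : e ∈ Y
      · exact congrFun this ⟨e, he⟩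
      · exact hv3 e he
    have : v = 0 := by
      ext f
      · rw [hv1, hv2z, Matrix.mulVec_zero]; rfl
      · rw [hv2z]; rfl
    exact this

end Aux4
section Aux5
variable {E : Type*} [Fintype E] [DecidableEq E]

lemma exists_feasible {L : Submodule (ZMod 2) (V E)}
    (hiso : ∀ u ∈ L, ∀ v ∈ L, omegaForm u v = 0) : ∃ Y, Feasible L Y := by
  suffices h : ∀ n : ℕ, ∀ Y : Finset E,
      Module.finrank (ZMod 2) ↥(L ⊓ coordSub Y) ≤ n → ∃ Y', Feasible L Y' from
    h _ ∅ le_rfl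
  intro n
  induction n with
  | zero =>
    intro Y hY
    refine ⟨Y, ?_⟩
    rw [Feasible, coordSpan_eq, ← Submodule.finrank_eq_zero (S := L ⊓ coordSub Y)]
    omega
  | succ n ih =>
    intro Y hY
    by_cases hbot : L ⊓ coordSub Y = ⊥
    · exact ⟨Y, by rw [Feasible, coordSpan_eq]; exact hbot⟩
    obtain ⟨v, hvmem, hvne⟩ := Submodule.exists_mem_ne_zero_of_ne_bot hbot
    rw [Submodule.mem_inf] at hvmem
    obtain ⟨hvL, hv1, hv2⟩ := hvmem
    have hex : ∃ e, v.1 e ≠ 0 ∨ v.2 e ≠ 0 := by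
      by_contra hc
      push_neg at hc
      apply hvne
      ext f
      · exact (hc f).1
      · exact (hc f).2
    obtain ⟨e, he⟩ := hex
    have key : ∃ Y' : Finset E, L ⊓ coordSub Y' < L ⊓ coordSub Y := by
      rcases he with h1 | h2
      · -- v.1 e ≠ 0, so e ∉ Y; use Y' = insert e Y
        have heY : e ∉ Y := fun h => h1 (hv1 e h)
        refine ⟨insert e Y, lt_of_le_of_ne ?_ ?_⟩
        · intro x hx
          rw [Submodule.mem_inf] at hx ⊢
          obtain ⟨hxL, hx1, hx2⟩ := hx
          have hx2e : x.2 e = 0 := by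
            have hom := hiso x hxL v hvL
            rw [omegaForm] at hom
            rw [Finset.sum_eq_single e ?h1 (by simp)] at hom
            · rw [hx1 e (Finset.mem_insert_self e Y), zero_mul, zero_add] at hom
              rcases zmod2_cases (x.2 e) with h | h
              · exact h
              · rw [h, one_mul] at hom
                exact absurd hom h1
            case h1 =>
              intro f _ hfe
              by_cases hf : f ∈ Y
              · rw [hx1 f (Finset.mem_insert_of_mem hf), hv1 f hf, zero_mul, mul_zero,
                  add_zero]
              · rw [hv2 f hf, hx2 f (by simp [hfe, hf]), mul_zero, zero_mul, add_zero]
          refine ⟨hxL, fun f hf => hx1 f (Finset.mem_insert_of_mem hf), fun f hf => ?_⟩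
          by_cases hfe : f = e
          · rw [hfe]; exact hx2e
          · exact hx2 f (by simp [hfe, hf])
        · intro hcon
          have : v ∈ L ⊓ coordSub (insert e Y) := by
            rw [hcon]; exact Submodule.mem_inf.2 ⟨hvL, hv1, hv2⟩
          rw [Submodule.mem_inf] at this
          exact h1 (this.2.1 e (Finset.mem_insert_self e Y))
      · -- v.2 e ≠ 0, so e ∈ Y; use Y' = Y.erase e
        have heY : e ∈ Y := by
          by_contra h
          exact h2 (hv2 e h)
        refine ⟨Y.erase e, lt_of_le_of_ne ?_ ?_⟩
        · intro x hx
          rw [Submodule.mem_inf] at hx ⊢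
          obtain ⟨hxL, hx1, hx2⟩ := hx
          have hx1e : x.1 e = 0 := by
            have hom := hiso x hxL v hvL
            rw [omegaForm] at hom
            rw [Finset.sum_eq_single e ?h1 (by simp)] at hom
            · rw [hx2 e (Finset.notMem_erase e Y), zero_mul, add_zero] at hom
              rcases zmod2_cases (x.1 e) with h | h
              · exact h
              · rw [h, one_mul] at hom
                exact absurd hom h2
            case h1 =>
              intro f _ hfe
              by_cases hf : f ∈ Y
              · rw [hx1 f (Finset.mem_erase.2 ⟨hfe, hf⟩), hv1 f hf, zero_mul, mul_zero,
                  add_zero]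
              · rw [hv2 f hf, hx2 f (fun hc => hf (Finset.mem_of_mem_erase hc)), mul_zero,
                  zero_mul, add_zero]
          refine ⟨hxL, fun f hf => ?_, fun f hf => ?_⟩
          · by_cases hfe : f = e
            · rw [hfe]; exact hx1e
            · exact hx1 f (Finset.mem_erase.2 ⟨hfe, hf⟩)
          · exact hx2 f (fun hc => hf (Finset.mem_of_mem_erase hc))
        · intro hcon
          have : v ∈ L ⊓ coordSub (Y.erase e) := by
            rw [hcon]; exact Submodule.mem_inf.2 ⟨hvL, hv1, hv2⟩
          rw [Submodule.mem_inf] at this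
          exact h2 (this.2.2 e (Finset.notMem_erase e Y))
    obtain ⟨Y', hY'⟩ := key
    have hlt := Submodule.finrank_lt_finrank_of_lt hY'
    exact ih Y' (by omega)

lemma exists_graphOf {L : Submodule (ZMod 2) (V E)} (hL : IsLagrangian L)
    (h0 : Feasible L ∅) : ∃ A : Matrix E E (ZMod 2), A.IsSymm ∧ L = graphOf A := by
  rw [Feasible, coordSpan_eq] at h0
  let π : L →ₗ[ZMod 2] (E → ZMod 2) :=
    (LinearMap.snd (ZMod 2) (E → ZMod 2) (E → ZMod 2)).comp L.subtype
  have hinj : Function.Injective π := by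
    rw [← LinearMap.ker_eq_bot, LinearMap.ker_eq_bot']
    rintro ⟨v, hv⟩ hm
    have hv2 : v.2 = 0 := hm
    have hmem : v ∈ L ⊓ coordSub ∅ :=
      Submodule.mem_inf.2 ⟨hv, fun e he => absurd he (Finset.notMem_empty e),
        fun e _ => congrFun hv2 e⟩
    rw [h0, Submodule.mem_bot] at hmem
    exact Subtype.ext hmem
  have hsurj : Function.Surjective π :=
    (LinearMap.injective_iff_surjective_of_finrank_eq_finrank
      (hL.2.trans (Module.finrank_fintype_fun_eq_card (ZMod 2)).symm)).mp hinj
  choose w hw using fun e => hsurj (Pi.single e 1)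
  have hw2 : ∀ e, ((w e : V E)).2 = Pi.single e 1 := fun e => hw e
  set A : Matrix E E (ZMod 2) := fun e f => ((w e : V E)).1 f with hAdef
  have hrow : ∀ e, rowVec A e = (w e : V E) := by
    intro e
    ext f
    · rfl
    · exact (congrFun (hw2 e) f).symm
  have homega : ∀ e f, omegaForm (w e : V E) (w f : V E) = A e f + A f e := by
    intro e f
    rw [omegaForm]
    have hterm : ∀ g : E, ((w e : V E)).1 g * ((w f : V E)).2 g
        + ((w e : V E)).2 g * ((w f : V E)).1 g
        = (if g = f then A e g else 0) + (if g = e then A f g else 0) := by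
      intro g
      rw [hw2 e, hw2 f]
      by_cases hgf : g = f <;> by_cases hge : g = e <;>
        simp [hgf, hge, Pi.single_apply, hAdef]
    rw [Finset.sum_congr rfl fun g _ => hterm g, Finset.sum_add_distrib,
      Finset.sum_ite_eq' Finset.univ f, Finset.sum_ite_eq' Finset.univ e]
    simp
  have hsymm : A.IsSymm := by
    rw [Matrix.IsSymm]
    funext e f
    show A f e = A e f
    have h := hL.1 _ (w e).2 _ (w f).2
    rw [homega e f] at h
    exact (zmod2_add_eq_zero _ _ h).symm
  refine ⟨A, hsymm, ?_⟩
  have hle : graphOf A ≤ L := by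
    rw [graphOf, Submodule.span_le]
    rintro _ ⟨e, rfl⟩
    rw [hrow]
    exact (w e).2
  exact (Submodule.eq_of_le_of_finrank_eq hle
    (by rw [finrank_graphOf A hsymm, hL.2])).symm

end Aux5
section Aux6
variable {E : Type*} [Fintype E] [DecidableEq E]

lemma zmod2_ne_iff : ∀ a b : ZMod 2, (a ≠ 0 ↔ b ≠ 0) → a = b := by decide

lemma zmod2_offdiag : ∀ x y p q : ZMod 2,
    (x * y - p * p ≠ 0 ↔ x * y - q * q ≠ 0) → p = q := by decide

/-- The `Fin 2` enumeration of a pair. -/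
def pairEquiv (e f : E) (hef : e ≠ f) : Fin 2 ≃ ↥({e, f} : Finset E) where
  toFun := ![⟨e, by simp⟩, ⟨f, by simp⟩]
  invFun x := if (x : E) = e then 0 else 1
  left_inv i := by
    fin_cases i
    · simp
    · simp [hef.symm]
  right_inv := by
    rintro ⟨x, hx⟩
    simp only [Finset.mem_insert, Finset.mem_singleton] at hx
    rcases hx with rfl | rfl
    · simp
    · simp [hef.symm]

lemma det_pair (A : Matrix E E (ZMod 2)) (e f : E) (hef : e ≠ f) :
    (A.submatrix (fun i : ↥({e, f} : Finset E) => (i : E))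
      (fun j : ↥({e, f} : Finset E) => (j : E))).det
      = A e e * A f f - A e f * A f e := by
  rw [← Matrix.det_submatrix_equiv_self (pairEquiv e f hef), Matrix.det_fin_two]
  simp [pairEquiv, Matrix.submatrix_apply]

lemma det_single (A : Matrix E E (ZMod 2)) (e : E) :
    (A.submatrix (fun i : ↥({e} : Finset E) => (i : E))
      (fun j : ↥({e} : Finset E) => (j : E))).det = A e e := by
  haveI : Subsingleton ↥({e} : Finset E) := ⟨fun a b => Subtype.ext (by
    have ha := a.2; have hb := b.2
    simp only [Finset.mem_singleton] at ha hb
    rw [ha, hb])⟩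
  rw [Matrix.det_eq_elem_of_subsingleton _ ⟨e, Finset.mem_singleton_self e⟩]
  rfl

lemma phi_inj {A A' : Matrix E E (ZMod 2)} (hA : A.IsSymm) (hA' : A'.IsSymm)
    (h : Phi A = Phi A') : A = A' := by
  have key : ∀ Y : Finset E,
      (IsUnit (A.submatrix (fun i : ↥Y => (i : E)) (fun j : ↥Y => (j : E))).det ↔
       IsUnit (A'.submatrix (fun i : ↥Y => (i : E)) (fun j : ↥Y => (j : E))).det) := by
    intro Y
    constructor <;> intro hu
    · have : Y ∈ Phi A := hu
      rw [h] at this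
      exact this
    · have : Y ∈ Phi A' := hu
      rw [← h] at this
      exact this
  have hdiag : ∀ e, A e e = A' e e := by
    intro e
    have h1 := key {e}
    rw [det_single, det_single, isUnit_iff_ne_zero, isUnit_iff_ne_zero] at h1
    exact zmod2_ne_iff _ _ h1
  funext e f
  by_cases hef : e = f
  · rw [hef]; exact hdiag f
  · have h1 := key {e, f}
    rw [det_pair A e f hef, det_pair A' e f hef, isUnit_iff_ne_zero,
      isUnit_iff_ne_zero, hA.apply e f, hA'.apply e f, hdiag e, hdiag f] at h1
    exact zmod2_offdiag _ _ _ _ h1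

end Aux6
section Aux7
variable {E : Type*} [Fintype E] [DecidableEq E]

lemma nu_graphOf {A : Matrix E E (ZMod 2)} (hA : A.IsSymm) : nu (graphOf A) = Phi A :=
  Set.ext fun Y => feasible_graphOf hA Y

lemma image_symmDiff_symmDiff (E' : Finset E) (S : Set (Finset E)) :
    (· ∆ E') '' ((· ∆ E') '' S) = S := by
  ext Z
  constructor
  · rintro ⟨W, ⟨U, hU, rfl⟩, rfl⟩
    simpa [symmDiff_symmDiff_cancel_right] using hU
  · intro hZ
    exact ⟨Z ∆ E', ⟨Z, hZ, rfl⟩, by simp [symmDiff_symmDiff_cancel_right]⟩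

end Aux7
/-- `ν_E` is a bijection between Lagrangian subspaces of `V_E` and binary
delta-matroids on the ground set `E`. -/
theorem stmt2 :
    Set.BijOn (fun L => nu L)
      {L : Submodule (ZMod 2) (V E) | IsLagrangian L}
      {Φ : Set (Finset E) | IsBinaryDM Φ} := by
  refine ⟨?_, ?_, ?_⟩
  · -- MapsTo
    intro L hL
    simp only [Set.mem_setOf_eq] at hL ⊢
    obtain ⟨Y₀, hY₀⟩ := exists_feasible hL.1
    have hLag' : IsLagrangian (Submodule.map (sigmaSet Y₀) L) :=
      isLagrangian_map_sigma Y₀ hL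
    have hfeas : Feasible (Submodule.map (sigmaSet Y₀) L) ∅ := by
      have := (feasible_map_sigma Y₀ Y₀ L).2 hY₀
      rwa [symmDiff_self, Finset.bot_eq_empty] at this
    obtain ⟨A, hAsymm, hL'eq⟩ := exists_graphOf hLag' hfeas
    refine ⟨A, Y₀, hAsymm, ?_⟩
    have h1 : nu (Submodule.map (sigmaSet Y₀) L) = Phi A := by
      rw [hL'eq, nu_graphOf hAsymm]
    have h2 : nu (Submodule.map (sigmaSet Y₀) L) = (· ∆ Y₀) '' nu L :=
      nu_map_sigma Y₀ L
    rw [← h1, h2, image_symmDiff_symmDiff]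
  · -- InjOn
    intro L1 h1 L2 h2 hnu
    simp only [Set.mem_setOf_eq] at h1 h2
    dsimp only at hnu
    obtain ⟨Y₀, hY₀⟩ := exists_feasible h1.1
    have hY₀' : Feasible L2 Y₀ := by
      have hmem : Y₀ ∈ nu L1 := hY₀
      rw [hnu] at hmem
      exact hmem
    have hfeas1 : Feasible (Submodule.map (sigmaSet Y₀) L1) ∅ := by
      have := (feasible_map_sigma Y₀ Y₀ L1).2 hY₀
      rwa [symmDiff_self, Finset.bot_eq_empty] at this
    have hfeas2 : Feasible (Submodule.map (sigmaSet Y₀) L2) ∅ := by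
      have := (feasible_map_sigma Y₀ Y₀ L2).2 hY₀'
      rwa [symmDiff_self, Finset.bot_eq_empty] at this
    obtain ⟨A1, hs1, he1⟩ := exists_graphOf (isLagrangian_map_sigma Y₀ h1) hfeas1
    obtain ⟨A2, hs2, he2⟩ := exists_graphOf (isLagrangian_map_sigma Y₀ h2) hfeas2
    have hPhi : Phi A1 = Phi A2 := by
      rw [← nu_graphOf hs1, ← nu_graphOf hs2, ← he1, ← he2, nu_map_sigma, nu_map_sigma, hnu]
    have hA : A1 = A2 := phi_inj hs1 hs2 hPhi
    have hmap : Submodule.map (sigmaSet Y₀) L1 = Submodule.map (sigmaSet Y₀) L2 := by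
      rw [he1, he2, hA]
    calc L1 = Submodule.map (sigmaSet Y₀) (Submodule.map (sigmaSet Y₀) L1) :=
          (map_map_sigma Y₀ L1).symm
      _ = Submodule.map (sigmaSet Y₀) (Submodule.map (sigmaSet Y₀) L2) := by rw [hmap]
      _ = L2 := map_map_sigma Y₀ L2
  · -- SurjOn
    rintro Φ ⟨A, E', hAsymm, rfl⟩
    refine ⟨Submodule.map (sigmaSet E') (graphOf A),
      isLagrangian_map_sigma E' (isLagrangian_graphOf A hAsymm), ?_⟩
    dsimp only
    rw [nu_map_sigma, nu_graphOf hAsymm]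
end

section
/- Let E be a finite set, L ⊆ V_E a Lagrangian subspace, and e ∈ E. Then ν_E(L * e) = ν_E(L) * {e}: the set system associated to the twisted Lagrangian subspace L * e equals the twist by {e} of the set system associated to L. In other words, Y ⊆ E is feasible for ν_E(L * e) if and only if Y Δ {e} is feasible for ν_E(L). -/
open Finset
open scoped symmDiff

variable {E : Type*} [Fintype E] [DecidableEq E]

lemma sigmaE_invol (e : E) : Function.Involutive (sigmaE e) := by
  intro u
  show ((_,_) : V E) = u
  ext f <;> simp [sigmaE] <;> split <;> rfl

lemma sigmaE_dualV (e f : E) :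
    sigmaE e (dualV f) = if f = e then baseV e else dualV f := by
  ext g <;> by_cases h : f = e <;>
    simp [sigmaE, dualV, baseV, h, Pi.single_apply] <;> aesop

lemma sigmaE_baseV (e f : E) :
    sigmaE e (baseV f) = if f = e then dualV e else baseV f := by
  ext g <;> by_cases h : f = e <;>
    simp [sigmaE, dualV, baseV, h, Pi.single_apply] <;> aesop

lemma dualV_mem_coordSpan {Y : Finset E} {f : E} (hf : f ∈ Y) :
    dualV f ∈ coordSpan (E := E) Y :=
  Submodule.subset_span (Set.mem_union_left _ ⟨f, by simpa using hf, rfl⟩)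

lemma baseV_mem_coordSpan {Y : Finset E} {f : E} (hf : f ∉ Y) :
    baseV f ∈ coordSpan (E := E) Y :=
  Submodule.subset_span (Set.mem_union_right _ ⟨f, by simpa using hf, rfl⟩)

lemma map_coordSpan_le (e : E) (Y : Finset E) :
    (coordSpan (Y ∆ ({e} : Finset E))).map (sigmaE e) ≤ coordSpan (E := E) Y := by
  rw [coordSpan, Submodule.map_span, Submodule.span_le]
  rintro _ ⟨v, hv, rfl⟩
  rcases hv with ⟨f, hf, rfl⟩ | ⟨f, hf, rfl⟩
  · rw [Finset.mem_coe] at hf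
    rw [sigmaE_dualV]
    split_ifs with h
    · subst h
      refine baseV_mem_coordSpan ?_
      intro hY
      simp [Finset.mem_symmDiff, hY] at hf
    · refine dualV_mem_coordSpan ?_
      simp [Finset.mem_symmDiff, h] at hf
      exact hf
  · simp only [Finset.coe_compl, Set.mem_compl_iff, Finset.mem_coe] at hf
    rw [sigmaE_baseV]
    split_ifs with h
    · subst h
      refine dualV_mem_coordSpan ?_
      by_contra hY
      exact hf (by simp [Finset.mem_symmDiff, hY])
    · refine baseV_mem_coordSpan ?_
      intro hY
      exact hf (by simp [Finset.mem_symmDiff, hY, h])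

lemma sigmaE_comp_self (e : E) :
    (sigmaE e).comp (sigmaE e) = (LinearMap.id : V E →ₗ[ZMod 2] V E) :=
  LinearMap.ext (sigmaE_invol e)

lemma map_coordSpan (e : E) (Y : Finset E) :
    (coordSpan (Y ∆ ({e} : Finset E))).map (sigmaE e) = coordSpan (E := E) Y := by
  refine le_antisymm (map_coordSpan_le e Y) ?_
  have h2 := map_coordSpan_le e (Y ∆ ({e} : Finset E))
  rw [symmDiff_symmDiff_cancel_right] at h2
  have h3 := Submodule.map_mono (f := sigmaE e) h2
  rwa [← Submodule.map_comp, sigmaE_comp_self, Submodule.map_id] at h3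

lemma sigmaE_inj (e : E) : Function.Injective (sigmaE e) :=
  (sigmaE_invol e).injective

set_option maxHeartbeats 2000000 in
/-- `ν_E(L * e) = ν_E(L) * {e}`; equivalently, `Y` is feasible for
`ν_E(L * e)` iff `Y ∆ {e}` is feasible for `ν_E(L)`. -/
theorem stmt6 (L : Submodule (ZMod 2) (V E)) (hL : IsLagrangian L) (e : E) :
    nu (L.map (sigmaE e)) = (· ∆ ({e} : Finset E)) '' nu L ∧
    ∀ Y : Finset E, Feasible (L.map (sigmaE e)) Y ↔ Feasible L (Y ∆ ({e} : Finset E)) := by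
  have key : ∀ Y : Finset E,
      Feasible (L.map (sigmaE e)) Y ↔ Feasible L (Y ∆ ({e} : Finset E)) := by
    intro Y
    unfold Feasible
    rw [← map_coordSpan e Y, ← Submodule.map_inf _ (sigmaE_inj e),
      ]
    constructor
    · intro h
      exact Submodule.map_injective_of_injective (sigmaE_inj e)
        (by rw [h, Submodule.map_bot])
    · intro h
      rw [h, Submodule.map_bot]
  refine ⟨?_, key⟩
  ext Y
  constructor
  · intro hY
    exact ⟨Y ∆ ({e} : Finset E), (key Y).mp hY, by simp⟩
  · rintro ⟨Z, hZ, rfl⟩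
    exact (key _).mpr (by rwa [symmDiff_symmDiff_cancel_right])
end
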